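/- Fix natural numbers p, l1, l3, k1. For every ε > 0 there exists Q such that for every finite field F with |F| ≥ Q and all matrices A1 ∈ F^{p×l1}, A3 ∈ F^{p×l3} with k1 ≤ rank(A1), the number of matrices E1 ∈ F^{l1×k1} such that dim( colspace(A3) ∩ colspace(A1·E1) ) = max( k1 − rank(A1) + dim( colspace(A1) ∩ colspace(A3) ), 0 ) is at least (1 − ε) · |F|^{l1·k1}. -/

import Mathlib

open Matrix Submodule Module

namespace CardInterAux



lemma card_prod_subtype {A B : Type*} [Fintype A] [Fintype B] (q : A × B → Prop) :
    Nat.card {x : A × B // q x} = ∑ b : B, Nat.card {a : A // q (a, b)} := by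
  classical
  have e : {x : A × B // q x} ≃ Σ b : B, {a : A // q (a, b)} :=
    { toFun := fun x => ⟨x.1.2, x.1.1, x.2⟩
      invFun := fun y => ⟨(y.2.1, y.1), y.2.2⟩
      left_inv := fun ⟨⟨a, b⟩, h⟩ => rfl
      right_inv := fun ⟨b, a, h⟩ => rfl }
  rw [Nat.card_congr e]
  simp [Nat.card_eq_fintype_card, Fintype.card_sigma]

lemma count_bad {k : ℕ} {β : Type*} [Fintype β] [Nonempty β] (j : Fin k)
    (C : (Fin k → β) → β → Prop)
    (hC : ∀ g g' : Fin k → β, (∀ i, i ≠ j → g i = g' i) → ∀ v, (C g v ↔ C g' v))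
    (N : ℕ) (hN : ∀ g : Fin k → β, Nat.card {v : β // C g v} ≤ N) :
    Nat.card {g : Fin k → β // C g (g j)} ≤ Fintype.card β ^ (k - 1) * N := by
  classical
  let e := Equiv.funSplitAt j β
  have e1 : {g : Fin k → β // C g (g j)} ≃
      {x : β × ({ i : Fin k // i ≠ j } → β) // C (e.symm x) x.1} :=
    e.subtypeEquiv (fun g => by rw [Equiv.symm_apply_apply]; exact Iff.rfl)
  rw [Nat.card_congr e1, card_prod_subtype]
  have hfib : ∀ h : { i : Fin k // i ≠ j } → β,
      Nat.card {v : β // C (e.symm (v, h)) v} ≤ N := by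
    intro h
    have hag : ∀ v : β, ∀ i, i ≠ j → e.symm (v, h) i = e.symm (Classical.arbitrary β, h) i := by
      intro v i hi
      simp [e, Equiv.funSplitAt_symm_apply, dif_neg hi]
    calc Nat.card {v : β // C (e.symm (v, h)) v}
        = Nat.card {v : β // C (e.symm (Classical.arbitrary β, h)) v} := by
          refine Nat.card_congr (Equiv.subtypeEquivRight ?_)
          intro v; exact hC _ _ (hag v) v
      _ ≤ N := hN _
  calc (∑ h : { i : Fin k // i ≠ j } → β, Nat.card {v : β // C (e.symm (v, h)) v})
      ≤ (Finset.univ : Finset ({ i : Fin k // i ≠ j } → β)).card • N :=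
        Finset.sum_le_card_nsmul _ _ _ (fun h _ => hfib h)
    _ = Fintype.card β ^ (k - 1) * N := by
        rw [Finset.card_univ, smul_eq_mul, Fintype.card_fun]
        congr 2
        rw [Fintype.card_subtype_compl, Fintype.card_subtype_eq, Fintype.card_fin]

lemma aux_chain {F V : Type*} [Field F] [AddCommGroup V] [Module F V] [FiniteDimensional F V]
    (S : ℕ → Submodule F V) (n : ℕ) (h : ∀ j < n, S j < S (j + 1)) :
    finrank F (S 0) + n ≤ finrank F (S n) := by
  induction n with
  | zero => simp
  | succ n ih =>
    have h1 := ih (fun j hj => h j (Nat.lt_succ_of_lt hj))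
    have h2 : finrank F (S n) < finrank F (S (n + 1)) :=
      Submodule.finrank_lt_finrank_of_lt (h n (Nat.lt_succ_self n))
    omega


variable {p l1 l3 k1 : ℕ} {F : Type} [Field F] [Fintype F]

/-- span of the images of the first `n` columns -/
noncomputable def Sgd (A1 : Matrix (Fin p) (Fin l1) F) (g : Fin k1 → Fin l1 → F) (n : ℕ) :
    Submodule F (Fin p → F) :=
  Submodule.span F ((fun j => A1.mulVec (g j)) '' {i : Fin k1 | (i : ℕ) < n})

noncomputable def Tgd (A1 : Matrix (Fin p) (Fin l1) F) (A3 : Matrix (Fin p) (Fin l3) F)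
    (m : ℕ) (g : Fin k1 → Fin l1 → F) (j : Fin k1) : Submodule F (Fin p → F) :=
  Sgd A1 g ↑j ⊔ (if (j : ℕ) < m then LinearMap.range A3.mulVecLin else ⊥)

def GoodP (A1 : Matrix (Fin p) (Fin l1) F) (A3 : Matrix (Fin p) (Fin l3) F)
    (m : ℕ) (g : Fin k1 → Fin l1 → F) : Prop :=
  ∀ j : Fin k1, A1.mulVec (g j) ∉ Tgd A1 A3 m g j

lemma Sgd_mono (A1 : Matrix (Fin p) (Fin l1) F) (g : Fin k1 → Fin l1 → F) (n : ℕ) :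
    Sgd A1 g n ≤ Sgd A1 g (n + 1) :=
  span_mono (Set.image_mono (fun _ hi => Nat.lt_succ_of_lt hi))

lemma Sgd_mem (A1 : Matrix (Fin p) (Fin l1) F) (g : Fin k1 → Fin l1 → F) (n : ℕ)
    (h : n < k1) : A1.mulVec (g ⟨n, h⟩) ∈ Sgd A1 g (n + 1) :=
  subset_span ⟨⟨n, h⟩, Nat.lt_succ_self n, rfl⟩

lemma Sgd_zero (A1 : Matrix (Fin p) (Fin l1) F) (g : Fin k1 → Fin l1 → F) :
    Sgd A1 g 0 = ⊥ := by
  have h : {i : Fin k1 | (i : ℕ) < 0} = (∅ : Set (Fin k1)) := by ext i; simp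
  simp [Sgd, h]

lemma Sgd_finrank_le (A1 : Matrix (Fin p) (Fin l1) F) (g : Fin k1 → Fin l1 → F) (n : ℕ) :
    finrank F (Sgd A1 g n) ≤ n := by
  classical
  rw [Sgd, Set.image_eq_range]
  refine le_trans (finrank_range_le_card _) ?_
  refine le_trans (Fintype.card_le_of_injective
    (fun i => (⟨(i : Fin k1), i.2⟩ : Fin n)) ?_) ?_
  · intro a b hab
    simp only [Fin.mk.injEq] at hab
    exact Subtype.ext (Fin.ext hab)
  · simp

lemma Sgd_le_range (A1 : Matrix (Fin p) (Fin l1) F) (g : Fin k1 → Fin l1 → F) (n : ℕ) :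
    Sgd A1 g n ≤ LinearMap.range A1.mulVecLin := by
  rw [Sgd]
  refine span_le.mpr ?_
  rintro x ⟨i, -, rfl⟩
  exact ⟨g i, rfl⟩

lemma Sgd_le_span_range (A1 : Matrix (Fin p) (Fin l1) F) (g : Fin k1 → Fin l1 → F) (n : ℕ) :
    Sgd A1 g n ≤ Submodule.span F (Set.range (fun j => A1.mulVec (g j))) :=
  span_mono (Set.image_subset_range _ _)

lemma good_implies (A1 : Matrix (Fin p) (Fin l1) F) (A3 : Matrix (Fin p) (Fin l3) F)
    (g : Fin k1 → Fin l1 → F)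
    (hg : GoodP A1 A3
      (min k1 (A1.rank - finrank F
        ↥(LinearMap.range A1.mulVecLin ⊓ LinearMap.range A3.mulVecLin))) g) :
    (Module.finrank F
        ↥(LinearMap.range A3.mulVecLin ⊓
          LinearMap.range (A1 * Matrix.of fun i j' => g j' i).mulVecLin) : ℤ) =
      max ((k1 : ℤ) - (A1.rank : ℤ) +
        (Module.finrank F
          ↥(LinearMap.range A1.mulVecLin ⊓ LinearMap.range A3.mulVecLin) : ℤ)) 0 := by
  classical
  set V1 := LinearMap.range A1.mulVecLin with hV1
  set W := LinearMap.range A3.mulVecLin with hW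
  set r1 := A1.rank with hr1
  set d := finrank F ↥(V1 ⊓ W) with hd
  set m := min k1 (r1 - d) with hm
  have hrV1 : finrank F ↥V1 = r1 := rfl
  have hdr : d ≤ r1 := by
    rw [hd, ← hrV1]; exact Submodule.finrank_mono inf_le_left
  have hminA : m ≤ k1 := min_le_left _ _
  have hminB : m ≤ r1 - d := min_le_right _ _
  have hminC : m = k1 ∨ m = r1 - d := min_choice _ _
  clear_value m
  set X := Submodule.span F (Set.range (fun j => A1.mulVec (g j))) with hX
  have hXeq : LinearMap.range (A1 * Matrix.of fun i j' => g j' i).mulVecLin = X := by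
    rw [Matrix.range_mulVecLin, hX]
    have htr : (A1 * Matrix.of fun i j' => g j' i)ᵀ = fun j => A1.mulVec (g j) := by
      funext j i
      simp [Matrix.transpose_apply, Matrix.mul_apply, Matrix.mulVec, dotProduct]
    rw [Matrix.col, htr]
  have hc1 : ∀ n, n < k1 → Sgd A1 g n < Sgd A1 g (n + 1) := by
    intro n hn
    refine lt_of_le_of_ne (Sgd_mono A1 g n) (fun heq => ?_)
    have hmem := Sgd_mem A1 g n hn
    rw [← heq] at hmem
    exact hg ⟨n, hn⟩ (Submodule.mem_sup_left hmem)
  have hXlb : k1 ≤ finrank F ↥X := by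
    have hch := aux_chain (Sgd A1 g) k1 (fun j hj => hc1 j hj)
    rw [Sgd_zero A1 g] at hch
    simp only [finrank_bot, zero_add] at hch
    exact le_trans hch (Submodule.finrank_mono (Sgd_le_span_range A1 g k1))
  have hXub : finrank F ↥X ≤ k1 := by
    simpa [Set.finrank] using finrank_range_le_card (R := F) (fun j => A1.mulVec (g j))
  have hXfr : finrank F ↥X = k1 := le_antisymm hXub hXlb
  have hc2 : ∀ n, n < m → (W ⊔ Sgd A1 g n) < (W ⊔ Sgd A1 g (n + 1)) := by
    intro n hn
    have hnk : n < k1 := lt_of_lt_of_le hn hminA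
    refine lt_of_le_of_ne (sup_le_sup_left (Sgd_mono A1 g n) W) (fun heq => ?_)
    have hmem : A1.mulVec (g ⟨n, hnk⟩) ∈ W ⊔ Sgd A1 g (n + 1) :=
      Submodule.mem_sup_right (Sgd_mem A1 g n hnk)
    rw [← heq] at hmem
    apply hg ⟨n, hnk⟩
    rw [Tgd, if_pos (show ((⟨n, hnk⟩ : Fin k1) : ℕ) < m from hn), sup_comm]
    exact hmem
  have hsup_lb : finrank F ↥W + m ≤ finrank F ↥(W ⊔ X) := by
    have hch : finrank F ↥(W ⊔ Sgd A1 g 0) + m ≤ finrank F ↥(W ⊔ Sgd A1 g m) :=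
      aux_chain (fun n => W ⊔ Sgd A1 g n) m hc2
    rw [Sgd_zero A1 g, sup_bot_eq] at hch
    exact le_trans hch (Submodule.finrank_mono
      (sup_le_sup_left (Sgd_le_span_range A1 g m) W))
  have hXleV1 : X ≤ V1 := by
    rw [hX]
    refine span_le.mpr ?_
    rintro x ⟨i, rfl⟩
    exact ⟨g i, rfl⟩
  have heq1 : finrank F ↥(W ⊔ X) + finrank F ↥(W ⊓ X) = finrank F ↥W + k1 := by
    rw [← hXfr]; exact Submodule.finrank_sup_add_finrank_inf_eq W X
  have hub2 : finrank F ↥(W ⊔ X) ≤ finrank F ↥(W ⊔ V1) :=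
    Submodule.finrank_mono (sup_le_sup_left hXleV1 W)
  have heq2 : finrank F ↥(W ⊔ V1) + d = finrank F ↥W + r1 := by
    have h2 := Submodule.finrank_sup_add_finrank_inf_eq W V1
    rw [hrV1] at h2
    have hcomm : W ⊓ V1 = V1 ⊓ W := inf_comm W V1
    rw [hcomm, ← hd] at h2
    exact h2
  rw [hXeq]
  omega




lemma bad_fiber (A1 : Matrix (Fin p) (Fin l1) F) (A3 : Matrix (Fin p) (Fin l3) F)
    (hk : k1 ≤ A1.rank) (j : Fin k1) (g : Fin k1 → Fin l1 → F) :
    Nat.card {v : Fin l1 → F // A1.mulVec v ∈ Tgd A1 A3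
      (min k1 (A1.rank - finrank F
        ↥(LinearMap.range A1.mulVecLin ⊓ LinearMap.range A3.mulVecLin))) g j} ≤
      Fintype.card F ^ (l1 - 1) := by
  classical
  set V1 := LinearMap.range A1.mulVecLin with hV1
  set W := LinearMap.range A3.mulVecLin with hW
  set r1 := A1.rank with hr1
  set d := finrank F ↥(V1 ⊓ W) with hd
  set m := min k1 (r1 - d) with hm
  have hrV1 : finrank F ↥V1 = r1 := rfl
  have hdr : d ≤ r1 := by
    rw [hd, ← hrV1]; exact Submodule.finrank_mono inf_le_left
  have hminA : m ≤ k1 := min_le_left _ _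
  have hminB : m ≤ r1 - d := min_le_right _ _
  clear_value m
  have hfrT : finrank F ↥(Tgd A1 A3 m g j ⊓ V1) < r1 := by
    by_cases hjm : ((j : ℕ) < m)
    · have hT : Tgd A1 A3 m g j = Sgd A1 g ↑j ⊔ W := by
        rw [Tgd, if_pos hjm]
      rw [hT, sup_inf_assoc_of_le W (Sgd_le_range A1 g ↑j), ← hV1]
      have h3 := Submodule.finrank_sup_add_finrank_inf_eq (Sgd A1 g ↑j) (W ⊓ V1)
      have h4 : finrank F ↥(W ⊓ V1) = d := by
        rw [hd, inf_comm W V1]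
      have h5 := Sgd_finrank_le A1 g (↑j : ℕ)
      have h6 : (j : ℕ) + d < r1 := by omega
      omega
    · have hT : Tgd A1 A3 m g j = Sgd A1 g ↑j := by
        rw [Tgd, if_neg hjm, sup_bot_eq]
      rw [hT]
      have h5 : finrank F ↥(Sgd A1 g ↑j ⊓ V1) ≤ (j : ℕ) :=
        le_trans (Submodule.finrank_mono inf_le_left) (Sgd_finrank_le A1 g ↑j)
      have h6 : (j : ℕ) < k1 := j.isLt
      omega
  have hne : Submodule.comap A1.mulVecLin (Tgd A1 A3 m g j) ≠ ⊤ := by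
    intro htop
    have hle : V1 ≤ Tgd A1 A3 m g j := LinearMap.range_le_iff_comap.mpr htop
    have heq : Tgd A1 A3 m g j ⊓ V1 = V1 := inf_eq_right.mpr hle
    rw [heq, hrV1] at hfrT
    exact lt_irrefl _ hfrT
  have hfrc : finrank F ↥(Submodule.comap A1.mulVecLin (Tgd A1 A3 m g j)) < l1 := by
    have h := Submodule.finrank_lt (K := F) (V := Fin l1 → F) hne
    simpa using h
  have hcard : Nat.card {v : Fin l1 → F // A1.mulVec v ∈ Tgd A1 A3 m g j}
      = Nat.card ↥(Submodule.comap A1.mulVecLin (Tgd A1 A3 m g j)) := by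
    refine Nat.card_congr (Equiv.subtypeEquivRight ?_)
    intro v
    simp [Submodule.mem_comap, Matrix.mulVecLin_apply]
  rw [hcard, Nat.card_eq_fintype_card, card_eq_pow_finrank (K := F)]
  exact Nat.pow_le_pow_right Fintype.card_pos (by omega)

lemma Tgd_congr (A1 : Matrix (Fin p) (Fin l1) F) (A3 : Matrix (Fin p) (Fin l3) F)
    (m : ℕ) (j : Fin k1) (g g' : Fin k1 → Fin l1 → F)
    (hgg : ∀ i, i ≠ j → g i = g' i) : Tgd A1 A3 m g j = Tgd A1 A3 m g' j := by
  rw [Tgd, Tgd]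
  congr 1
  rw [Sgd, Sgd]
  refine congrArg _ (Set.image_congr ?_)
  intro i hi
  have hij : i ≠ j := by
    intro hh; subst hh
    simp only [Set.mem_setOf_eq] at hi
    exact lt_irrefl _ hi
  rw [hgg i hij]

lemma main_count (A1 : Matrix (Fin p) (Fin l1) F) (A3 : Matrix (Fin p) (Fin l3) F)
    (hk : k1 ≤ A1.rank) :
    Fintype.card F ^ (l1 * k1) ≤
      Nat.card {E1 : Matrix (Fin l1) (Fin k1) F //
          (Module.finrank F
            ↥(LinearMap.range A3.mulVecLin ⊓ LinearMap.range (A1 * E1).mulVecLin) : ℤ) =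
          max ((k1 : ℤ) - (A1.rank : ℤ) +
            (Module.finrank F
              ↥(LinearMap.range A1.mulVecLin ⊓ LinearMap.range A3.mulVecLin) : ℤ)) 0}
        + k1 * Fintype.card F ^ (l1 * k1 - 1) := by
  classical
  set q := Fintype.card F with hq
  set m := min k1 (A1.rank - finrank F
    ↥(LinearMap.range A1.mulVecLin ⊓ LinearMap.range A3.mulVecLin)) with hm
  -- per-column bad count
  have hbadj : ∀ j : Fin k1,
      Nat.card {g : Fin k1 → Fin l1 → F // A1.mulVec (g j) ∈ Tgd A1 A3 m g j} ≤
        (q ^ l1) ^ (k1 - 1) * q ^ (l1 - 1) := by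
    intro j
    have hcb := count_bad j (fun g v => A1.mulVec v ∈ Tgd A1 A3 m g j)
      (fun g g' hgg v => iff_of_eq (congrArg
        (fun U : Submodule F (Fin p → F) => A1.mulVec v ∈ U) (Tgd_congr A1 A3 m j g g' hgg)))
      (q ^ (l1 - 1)) (fun g => bad_fiber A1 A3 hk j g)
    calc Nat.card {g : Fin k1 → Fin l1 → F // A1.mulVec (g j) ∈ Tgd A1 A3 m g j}
        ≤ Fintype.card (Fin l1 → F) ^ (k1 - 1) * q ^ (l1 - 1) := hcb
      _ = (q ^ l1) ^ (k1 - 1) * q ^ (l1 - 1) := by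
          rw [Fintype.card_fun, Fintype.card_fin]
  -- exponent arithmetic
  have hexp : ∀ _ : Fin k1, (q ^ l1) ^ (k1 - 1) * q ^ (l1 - 1) ≤ q ^ (l1 * k1 - 1) := by
    intro j
    have hl1 : k1 ≤ l1 := le_trans hk (Matrix.rank_le_width A1)
    have hk1 : 1 ≤ k1 := Nat.succ_le_of_lt (Nat.pos_of_ne_zero (fun h => (h ▸ j).elim0))
    rw [← pow_mul, ← pow_add]
    apply Nat.pow_le_pow_right Fintype.card_pos
    obtain ⟨k, rfl⟩ : ∃ k, k1 = k + 1 := ⟨k1 - 1, by omega⟩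
    have h2 : l1 * (k + 1) = l1 * k + l1 := by ring
    rw [Nat.add_sub_cancel, h2]
    omega
  have hsum : (∑ j : Fin k1, Nat.card
        {g : Fin k1 → Fin l1 → F // A1.mulVec (g j) ∈ Tgd A1 A3 m g j}) ≤
      k1 * q ^ (l1 * k1 - 1) := by
    calc (∑ j : Fin k1, Nat.card
          {g : Fin k1 → Fin l1 → F // A1.mulVec (g j) ∈ Tgd A1 A3 m g j})
        ≤ ∑ j : Fin k1, q ^ (l1 * k1 - 1) :=
          Finset.sum_le_sum (fun j _ => le_trans (hbadj j) (hexp j))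
      _ = k1 * q ^ (l1 * k1 - 1) := by simp [mul_comm]
  have hub : Nat.card {g : Fin k1 → Fin l1 → F // ¬ GoodP A1 A3 m g} ≤
      ∑ j : Fin k1,
        Nat.card {g : Fin k1 → Fin l1 → F // A1.mulVec (g j) ∈ Tgd A1 A3 m g j} := by
    rw [Nat.card_eq_fintype_card, Fintype.card_subtype]
    refine le_trans (Finset.card_le_card (fun g hg => ?_))
      (le_trans (Finset.card_biUnion_le
        (s := Finset.univ)
        (t := fun j => Finset.univ.filter fun g => A1.mulVec (g j) ∈ Tgd A1 A3 m g j)) ?_)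
    · replace hg : ¬ GoodP A1 A3 m g := by simpa using hg
      simp only [GoodP] at hg
      push_neg at hg
      obtain ⟨j, hj⟩ := hg
      exact Finset.mem_biUnion.mpr ⟨j, Finset.mem_univ j,
        Finset.mem_filter.mpr ⟨Finset.mem_univ g, hj⟩⟩
    · refine Finset.sum_le_sum (fun j _ => ?_)
      rw [Nat.card_eq_fintype_card, Fintype.card_subtype]
  have hub2 : Nat.card {g : Fin k1 → Fin l1 → F // ¬ GoodP A1 A3 m g} ≤
      k1 * q ^ (l1 * k1 - 1) := le_trans hub hsum
  clear hub hsum hbadj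
  -- split into good and bad
  have hsplit : Nat.card {g : Fin k1 → Fin l1 → F // GoodP A1 A3 m g}
      + Nat.card {g : Fin k1 → Fin l1 → F // ¬ GoodP A1 A3 m g} = q ^ (l1 * k1) := by
    rw [Nat.card_eq_fintype_card, Nat.card_eq_fintype_card]
    have h1 := Fintype.card_subtype_compl (α := Fin k1 → Fin l1 → F) (GoodP A1 A3 m)
    have h2 := Fintype.card_subtype_le (p := fun g : Fin k1 → Fin l1 → F => GoodP A1 A3 m g)
    have h3 : Fintype.card (Fin k1 → Fin l1 → F) = q ^ (l1 * k1) := by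
      rw [Fintype.card_fun, Fintype.card_fun, Fintype.card_fin, Fintype.card_fin, ← pow_mul]
    omega
  have hinj : Nat.card {g : Fin k1 → Fin l1 → F // GoodP A1 A3 m g} ≤
      Nat.card {E1 : Matrix (Fin l1) (Fin k1) F //
          (Module.finrank F
            ↥(LinearMap.range A3.mulVecLin ⊓ LinearMap.range (A1 * E1).mulVecLin) : ℤ) =
          max ((k1 : ℤ) - (A1.rank : ℤ) +
            (Module.finrank F
              ↥(LinearMap.range A1.mulVecLin ⊓ LinearMap.range A3.mulVecLin) : ℤ)) 0} := by
    refine Nat.card_le_card_of_injective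
      (fun x => ⟨Matrix.of fun i j' => x.1 j' i, good_implies A1 A3 x.1 x.2⟩) ?_
    intro x y hxy
    simp only [Subtype.mk.injEq] at hxy
    apply Subtype.ext
    funext j i
    exact congrArg (fun M : Matrix (Fin l1) (Fin k1) F => M i j) hxy
  generalize hB : k1 * q ^ (l1 * k1 - 1) = B at hub2 ⊢
  omega

end CardInterAux


open Matrix

/-- For every ε > 0 there is a field-size threshold Q beyond which, for any matrices A1, A3
with k1 ≤ rank(A1), for at least a (1 − ε) fraction of the matrices E1, the dimension of
colspace(A3) ∩ colspace(A1·E1) equals max(k1 − rank(A1) + dim(colspace(A1) ∩ colspace(A3)), 0). -/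
theorem card_intersection_dim_ge (p l1 l3 k1 : ℕ) :
    ∀ ε : ℝ, 0 < ε → ∃ Q : ℕ, ∀ (F : Type) [Field F] [Fintype F],
      Q ≤ Fintype.card F →
      ∀ (A1 : Matrix (Fin p) (Fin l1) F) (A3 : Matrix (Fin p) (Fin l3) F),
        k1 ≤ A1.rank →
        (1 - ε) * (Fintype.card F : ℝ) ^ (l1 * k1) ≤
          (Nat.card {E1 : Matrix (Fin l1) (Fin k1) F //
            (Module.finrank F
              ↥(LinearMap.range A3.mulVecLin ⊓ LinearMap.range (A1 * E1).mulVecLin) : ℤ) =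
            max ((k1 : ℤ) - (A1.rank : ℤ) +
              (Module.finrank F
                ↥(LinearMap.range A1.mulVecLin ⊓ LinearMap.range A3.mulVecLin) : ℤ)) 0} : ℝ) := by
  intro ε hε
  refine ⟨Nat.ceil ((k1 : ℝ) / ε) + 1, ?_⟩
  intro F _ _ hQ A1 A3 hk
  have hmain := CardInterAux.main_count A1 A3 hk
  set q := Fintype.card F with hq
  set N := Nat.card {E1 : Matrix (Fin l1) (Fin k1) F //
            (Module.finrank F
              ↥(LinearMap.range A3.mulVecLin ⊓ LinearMap.range (A1 * E1).mulVecLin) : ℤ) =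
            max ((k1 : ℤ) - (A1.rank : ℤ) +
              (Module.finrank F
                ↥(LinearMap.range A1.mulVecLin ⊓ LinearMap.range A3.mulVecLin) : ℤ)) 0} with hN
  have hq1 : 1 ≤ q := Fintype.card_pos
  have hqR : (1 : ℝ) ≤ (q : ℝ) := by exact_mod_cast hq1
  have hcast : ((q : ℝ)) ^ (l1 * k1) ≤ (N : ℝ) + (k1 : ℝ) * (q : ℝ) ^ (l1 * k1 - 1) := by
    exact_mod_cast hmain
  rcases Nat.eq_zero_or_pos k1 with h0 | h1
  · subst h0
    simp only [Nat.mul_zero, pow_zero, Nat.cast_zero, zero_mul, add_zero] at hcast ⊢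
    nlinarith
  · have hl1 : 1 ≤ l1 := le_trans h1 (hk.trans (Matrix.rank_le_width A1))
    have hsplitpow : ((q : ℝ)) ^ (l1 * k1) = (q : ℝ) ^ (l1 * k1 - 1) * q := by
      rw [← pow_succ]
      congr 1
      have : 1 ≤ l1 * k1 := Nat.one_le_iff_ne_zero.mpr (by positivity)
      omega
    have hceil : ((Nat.ceil ((k1 : ℝ) / ε) : ℕ) : ℝ) ≤ (q : ℝ) := by
      exact_mod_cast le_trans (Nat.le_succ _) hQ
    have h3 : (k1 : ℝ) / ε ≤ (q : ℝ) := le_trans (Nat.le_ceil _) hceil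
    have hkq : (k1 : ℝ) ≤ ε * (q : ℝ) := by
      rw [div_le_iff₀ hε] at h3
      linarith
    have hpow_nonneg : (0 : ℝ) ≤ (q : ℝ) ^ (l1 * k1 - 1) := by positivity
    have hb : (k1 : ℝ) * (q : ℝ) ^ (l1 * k1 - 1) ≤ ε * ((q : ℝ)) ^ (l1 * k1) := by
      rw [hsplitpow]
      calc (k1 : ℝ) * (q : ℝ) ^ (l1 * k1 - 1)
          ≤ (ε * (q : ℝ)) * (q : ℝ) ^ (l1 * k1 - 1) :=
            mul_le_mul_of_nonneg_right hkq hpow_nonneg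
        _ = ε * ((q : ℝ) ^ (l1 * k1 - 1) * (q : ℝ)) := by ring
    linarith
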